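/- Let ζ ∈ k be a primitive 4th root of unity and A = k[u]/(u⁴ − 1). (i) For every γ ∈ k with γ² = 2ζ there exists a T(4,2,1)-module-algebra structure (σ, δ) on A with σ(u) = ζ·u and δ(u) = γ·u³, and this structure is inner-faithful (σ has order 4 and δ ≠ 0). (ii) Conversely, every T(4,2,1)-module-algebra structure (σ, δ) on A with σ(u) = ζ·u and δ ≠ 0 satisfies δ(u) = γ·u³ for some γ ∈ k with γ² = 2ζ. -/

import Mathlib

/-- A `T(4,2,1)`-module-algebra structure on `A`, given by the action `σ` of the
grouplike `g` and the action `δ` of the `(g,1)`-skew primitive `x`, where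
`g⁴ = 1`, `x² = g² - 1`, `gx = -xg`. -/
def IsT421Action {k A : Type*} [Field k] [CommRing A] [Algebra k A]
    (σ : A ≃ₐ[k] A) (δ : A →ₗ[k] A) : Prop :=
  σ ^ 4 = 1 ∧ δ 1 = 0 ∧
  (∀ a c : A, δ (a * c) = σ a * δ c + δ a * c) ∧
  σ.toLinearMap ∘ₗ δ = -(δ ∘ₗ σ.toLinearMap) ∧
  δ ∘ₗ δ = σ.toLinearMap ∘ₗ σ.toLinearMap - LinearMap.id

private lemma bilin_ext {ι k A : Type*} [Field k] [CommRing A] [Algebra k A]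
    (b : Module.Basis ι k A) {F G : A →ₗ[k] A →ₗ[k] A}
    (h : ∀ i j, F (b i) (b j) = G (b i) (b j)) (a c : A) : F a c = G a c := by
  have : F = G := b.ext fun i => b.ext fun j => h i j
  rw [this]

/-- On `A = k[u]/(u⁴ - 1)` with `ζ` a primitive 4th root of unity:
(i) for every `γ` with `γ² = 2ζ` there is an inner-faithful `T(4,2,1)`-module-algebra
structure with `σ(u) = ζ·u`, `δ(u) = γ·u³`; (ii) every such structure with
`σ(u) = ζ·u` and `δ ≠ 0` satisfies `δ(u) = γ·u³` for some `γ` with `γ² = 2ζ`. -/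
theorem stmt_13 (k : Type*) [Field k] [IsAlgClosed k] [CharZero k]
    (ζ : k) (hζ : IsPrimitiveRoot ζ 4)
    (A : Type*) [CommRing A] [Algebra k A]
    (u : A) (b : Module.Basis (Fin 4) k A) (hb : ∀ i : Fin 4, b i = u ^ (i : ℕ))
    (hu : u ^ 4 = 1) :
    (∀ γ : k, γ ^ 2 = 2 * ζ →
      ∃ (σ : A ≃ₐ[k] A) (δ : A →ₗ[k] A),
        IsT421Action σ δ ∧ σ u = ζ • u ∧ δ u = γ • u ^ 3 ∧
        orderOf σ = 4 ∧ δ ≠ 0) ∧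
    (∀ (σ : A ≃ₐ[k] A) (δ : A →ₗ[k] A),
      IsT421Action σ δ → σ u = ζ • u → δ ≠ 0 →
        ∃ γ : k, γ ^ 2 = 2 * ζ ∧ δ u = γ • u ^ 3) := by
  have hζ4 : ζ ^ 4 = 1 := hζ.pow_eq_one
  have hζ2 : ζ ^ 2 = -1 := by
    have hne : ζ ^ 2 ≠ 1 := hζ.pow_ne_one_of_pos_of_lt (by norm_num) (by norm_num)
    have h0 : (ζ ^ 2 - 1) * (ζ ^ 2 + 1) = 0 := by linear_combination hζ4
    rcases mul_eq_zero.1 h0 with h | h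
    · exact absurd (by linear_combination h : ζ ^ 2 = 1) hne
    · linear_combination h
  have hζ0 : ζ ≠ 0 := by
    intro h; rw [h] at hζ2; norm_num at hζ2
  have hζn1 : ζ ≠ -1 := by
    intro h; rw [h] at hζ2; norm_num at hζ2
  have hζ1 : ζ ≠ 1 := by
    intro h; rw [h] at hζ2; norm_num at hζ2
  have hupow : ∀ n : ℕ, u ^ (n % 4) = u ^ n := by
    intro n
    conv_rhs => rw [← Nat.mod_add_div n 4, pow_add, pow_mul, hu, one_pow, mul_one]
  have hζpow : ∀ n : ℕ, ζ ^ (n % 4) = ζ ^ n := by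
    intro n
    conv_rhs => rw [← Nat.mod_add_div n 4, pow_add, pow_mul, hζ4, one_pow, mul_one]
  have hmul : ∀ i j : Fin 4, b i * b j = b (i + j) := by
    intro i j
    rw [hb, hb, hb, ← pow_add, Fin.val_add, hupow]
  have hb0 : b 0 = 1 := by rw [hb]; norm_num
  have hune : u ≠ 0 := by
    have := b.ne_zero 1
    rwa [hb 1, show ((1 : Fin 4) : ℕ) = 1 from rfl, pow_one] at this
  constructor
  · -- part (i)
    intro γ hγ
    have hγ0 : γ ≠ 0 := by
      intro h
      have h2 : 2 * ζ = 0 := by rw [← hγ, h]; ring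
      rcases mul_eq_zero.1 h2 with h' | h'
      · norm_num at h'
      · exact hζ0 h'
    -- define σ and δ
    set S : A →ₗ[k] A := b.constr k fun i => ζ ^ (i : ℕ) • b i with hS
    set T : A →ₗ[k] A := b.constr k fun i => (ζ ^ (i : ℕ))⁻¹ • b i with hT
    set d : Fin 4 → A := ![0, γ • b 3, (γ * (1 + ζ)) • b 0, (γ * ζ) • b 1] with hd
    set D : A →ₗ[k] A := b.constr k d with hD
    have hSb : ∀ i, S (b i) = ζ ^ (i : ℕ) • b i := fun i => b.constr_basis k _ i
    have hDb : ∀ i, D (b i) = d i := fun i => b.constr_basis k _ i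
    have hST : S ∘ₗ T = LinearMap.id := by
      refine b.ext fun i => ?_
      simp only [LinearMap.comp_apply, hT, b.constr_basis, map_smul, hSb,
        LinearMap.id_apply, smul_smul]
      rw [inv_mul_cancel₀ (pow_ne_zero _ hζ0), one_smul]
    have hTS : T ∘ₗ S = LinearMap.id := by
      refine b.ext fun i => ?_
      simp only [LinearMap.comp_apply, hSb, map_smul, hT, b.constr_basis,
        LinearMap.id_apply, smul_smul]
      rw [mul_inv_cancel₀ (pow_ne_zero _ hζ0), one_smul]
    have hSone : S 1 = 1 := by
      rw [← hb0, hSb]; simp [hb0]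
    have hSmul : ∀ a c : A, S (a * c) = S a * S c := by
      have key : ∀ i j, ((LinearMap.mul k A).compr₂ S) (b i) (b j)
          = ((LinearMap.mul k A).compl₁₂ S S) (b i) (b j) := by
        intro i j
        simp only [LinearMap.compr₂_apply, LinearMap.mul_apply', LinearMap.compl₁₂_apply]
        rw [hmul, hSb, hSb, hSb, smul_mul_smul_comm, hmul, Fin.val_add, hζpow, pow_add]
      intro a c
      have := bilin_ext b key a c
      simpa only [LinearMap.compr₂_apply, LinearMap.mul_apply', LinearMap.compl₁₂_apply]
        using this
    set E : A ≃ₗ[k] A := LinearEquiv.ofLinear S T hST hTS with hE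
    set σ : A ≃ₐ[k] A := AlgEquiv.ofLinearEquiv E hSone hSmul with hσ
    have hσa : ∀ a : A, σ a = S a := fun a => rfl
    have hσlin : σ.toLinearMap = S := by ext a; exact hσa a
    -- Leibniz for D
    have hLeib : ∀ a c : A, D (a * c) = S a * D c + D a * c := by
      have key : ∀ i j, ((LinearMap.mul k A).compr₂ D) (b i) (b j)
          = ((LinearMap.mul k A).compl₁₂ S D + (LinearMap.mul k A).compl₁₂ D LinearMap.id)
              (b i) (b j) := by
        intro i j
        simp only [LinearMap.compr₂_apply, LinearMap.mul_apply', LinearMap.compl₁₂_apply,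
          LinearMap.add_apply, LinearMap.id_apply]
        rw [hmul, hDb, hDb, hDb, hSb]
        fin_cases i <;> fin_cases j <;>
          simp [hd, hmul, smul_smul, smul_mul_assoc, mul_smul_comm, show ((0:Fin 4):ℕ) = 0 from rfl, show ((1:Fin 4):ℕ) = 1 from rfl, show ((2:Fin 4):ℕ) = 2 from rfl, show ((3:Fin 4):ℕ) = 3 from rfl] <;>
        match_scalars <;>
        first
          | ring1
          | linear_combination γ * hζ2
          | linear_combination (-γ) * hζ2
          | linear_combination ζ * γ * hζ2
          | linear_combination (-(ζ * γ)) * hζ2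
          | linear_combination γ * (1 + ζ) * hζ2
          | linear_combination (-(γ * (1 + ζ))) * hζ2
          | linear_combination γ * (1 - ζ ^ 2 - ζ) * hζ2
          | linear_combination (-(γ * (1 - ζ ^ 2 - ζ))) * hζ2
          | linear_combination γ * (1 - ζ ^ 2) * hζ2
          | linear_combination (-(γ * (1 - ζ ^ 2))) * hζ2
          | linear_combination γ * ζ ^ 2 * hζ2
          | linear_combination (-(γ * ζ ^ 2)) * hζ2
      intro a c
      have := bilin_ext b key a c
      simpa only [LinearMap.compr₂_apply, LinearMap.mul_apply', LinearMap.compl₁₂_apply,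
        LinearMap.add_apply, LinearMap.id_apply] using this
    have hD1 : D 1 = 0 := by rw [← hb0, hDb]; simp [hd]
    -- σ ∘ δ = -(δ ∘ σ)
    have hanti : S ∘ₗ D = -(D ∘ₗ S) := by
      refine b.ext fun i => ?_
      simp only [LinearMap.comp_apply, LinearMap.neg_apply, hSb, map_smul, hDb]
      fin_cases i <;>
        simp [hd, hDb, hSb, hmul, smul_smul, show ((0:Fin 4):ℕ) = 0 from rfl, show ((1:Fin 4):ℕ) = 1 from rfl, show ((2:Fin 4):ℕ) = 2 from rfl, show ((3:Fin 4):ℕ) = 3 from rfl] <;>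
      match_scalars <;>
      first
        | ring1
        | linear_combination γ * ζ * hζ2
        | linear_combination (-(γ * ζ)) * hζ2
        | linear_combination γ * (1 + ζ) * hζ2
        | linear_combination (-(γ * (1 + ζ))) * hζ2
        | linear_combination γ * ζ ^ 2 * hζ2
        | linear_combination (-(γ * ζ ^ 2)) * hζ2
        | linear_combination γ * hζ2
        | linear_combination (-γ) * hζ2
        | linear_combination γ * (1 - ζ ^ 2) * hζ2
        | linear_combination (-(γ * (1 - ζ ^ 2))) * hζ2
    -- δ ∘ δ = σ² - id
    have hsq : D ∘ₗ D = S ∘ₗ S - LinearMap.id := by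
      refine b.ext fun i => ?_
      simp only [LinearMap.comp_apply, LinearMap.sub_apply, LinearMap.id_apply, hSb,
        map_smul, hDb]
      fin_cases i <;>
        simp [hd, hDb, hSb, hmul, smul_smul, show ((0:Fin 4):ℕ) = 0 from rfl, show ((1:Fin 4):ℕ) = 1 from rfl, show ((2:Fin 4):ℕ) = 2 from rfl, show ((3:Fin 4):ℕ) = 3 from rfl] <;>
      match_scalars <;>
      first
        | ring1
        | linear_combination ζ * hγ + hζ2
        | linear_combination ζ * hγ - hζ2
        | linear_combination (-ζ) * hγ + hζ2
        | linear_combination (-ζ) * hγ - hζ2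
        | linear_combination ζ * hγ + (1 + ζ ^ 2 - ζ ^ 4) * hζ2
        | linear_combination (-ζ) * hγ - (1 + ζ ^ 2 - ζ ^ 4) * hζ2
        | linear_combination ζ * hγ + (1 - ζ ^ 2 + ζ ^ 4) * hζ2
        | linear_combination (1 - ζ ^ 2) * hζ2
        | linear_combination (-(1 - ζ ^ 2)) * hζ2
        | linear_combination hζ4
        | linear_combination (-(1:k)) * hζ4
        | linear_combination ζ * hγ + ζ ^ 2 * hζ4 + hζ2
        | linear_combination ζ * hγ - ζ ^ 2 * hζ4 - hζ2
        | linear_combination ζ * hγ - ζ ^ 2 * hζ4 + hζ2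
        | linear_combination ζ * hγ + ζ ^ 2 * hζ4 - hζ2
    have hσu : σ u = ζ • u := by
      have h1 : u = b 1 := by
        rw [hb 1, show ((1 : Fin 4) : ℕ) = 1 from rfl, pow_one]
      rw [h1, hσa, hSb, show ((1 : Fin 4) : ℕ) = 1 from rfl, pow_one]
    have hσ4 : σ ^ 4 = 1 := by
      have hS4 : ∀ a, S (S (S (S a))) = a := by
        have hcomp : S ∘ₗ (S ∘ₗ (S ∘ₗ S)) = LinearMap.id := by
          refine b.ext fun i => ?_
          simp only [LinearMap.comp_apply, hSb, map_smul, LinearMap.id_apply, smul_smul]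
          rw [show ζ ^ (i:ℕ) * ζ ^ (i:ℕ) * ζ ^ (i:ℕ) * ζ ^ (i:ℕ) = (ζ^4)^(i:ℕ) by ring,
            hζ4, one_pow, one_smul]
        intro a
        have := LinearMap.congr_fun hcomp a
        simpa using this
      ext a
      show (σ ^ 4) a = a
      rw [show (4:ℕ) = 3 + 1 from rfl, pow_succ, show (3:ℕ) = 2 + 1 from rfl, pow_succ,
        show (2:ℕ) = 1 + 1 from rfl, pow_succ, pow_one]
      simp only [AlgEquiv.mul_apply, hσa]
      exact hS4 a
    refine ⟨σ, D, ⟨hσ4, hD1, by simpa only [hσa] using hLeib, by rw [hσlin]; exact hanti,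
      by rw [hσlin]; exact hsq⟩, hσu, ?_, ?_, ?_⟩
    · calc D u = D (b 1) := by
            rw [hb 1, show ((1 : Fin 4) : ℕ) = 1 from rfl, pow_one]
        _ = γ • b 3 := by rw [hDb]; simp [hd]
        _ = γ • u ^ 3 := by rw [hb 3, show ((3 : Fin 4) : ℕ) = 3 from rfl]
    · -- orderOf σ = 4
      have h2ne : σ ^ 2 ≠ 1 := by
        intro h
        have heq : (σ ^ 2) u = u := by rw [h]; rfl
        rw [show (2:ℕ) = 1 + 1 from rfl, pow_succ, pow_one, AlgEquiv.mul_apply, hσu,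
          map_smul, hσu, smul_smul, show ζ * ζ = ζ ^ 2 by ring, hζ2] at heq
        have h2 : ((2:k)) • u = 0 := by
          have e2 : (-1 : k) • u + u = 0 := by module
          rw [heq] at e2
          calc ((2:k)) • u = u + u := by module
          _ = 0 := e2
        rcases smul_eq_zero.1 h2 with h' | h'
        · norm_num at h'
        · exact hune h'
      have := orderOf_eq_prime_pow (x := σ) (n := 1) (p := 2)
        (by simpa using h2ne) (by simpa using hσ4)
      simpa using this
    · -- D ≠ 0
      intro h
      have hz : D (b 1) = 0 := by rw [h]; rfl
      rw [hDb] at hz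
      simp only [hd, Matrix.cons_val_one, Matrix.head_cons, Fin.isValue] at hz
      rcases smul_eq_zero.1 hz with h' | h'
      · exact hγ0 h'
      · exact b.ne_zero 3 h'
  · -- part (ii)
    rintro σ δ ⟨h1, h2, h3, h4, h5⟩ hσu hδne
    have hσpow : ∀ n : ℕ, σ (u ^ n) = ζ ^ n • u ^ n := by
      intro n; rw [map_pow, hσu, smul_pow]
    have hσb : ∀ i : Fin 4, σ (b i) = ζ ^ (i:ℕ) • b i := by
      intro i; rw [hb, hσpow]
    -- eigenvector equation
    have hA : σ (δ u) = (-ζ) • δ u := by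
      have := LinearMap.congr_fun h4 u
      simp only [LinearMap.comp_apply, LinearMap.neg_apply, AlgEquiv.toLinearMap_apply] at this
      rw [this, hσu, map_smul]
      module
    set c : Fin 4 → k := fun i => b.repr (δ u) i with hc
    have hrepr : δ u = c 0 • b 0 + c 1 • b 1 + c 2 • b 2 + c 3 • b 3 := by
      have := b.sum_repr (δ u)
      rw [Fin.sum_univ_four] at this
      rw [← this]
    have hth : (c 0 * ζ ^ (0:ℕ)) • b 0 + (c 1 * ζ ^ (1:ℕ)) • b 1
          + (c 2 * ζ ^ (2:ℕ)) • b 2 + (c 3 * ζ ^ (3:ℕ)) • b 3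
        = (-ζ * c 0) • b 0 + (-ζ * c 1) • b 1 + (-ζ * c 2) • b 2 + (-ζ * c 3) • b 3 := by
      have heq : σ (δ u) = (c 0 * ζ ^ (0:ℕ)) • b 0 + (c 1 * ζ ^ (1:ℕ)) • b 1
          + (c 2 * ζ ^ (2:ℕ)) • b 2 + (c 3 * ζ ^ (3:ℕ)) • b 3 := by
        rw [hrepr]
        simp only [map_add, map_smul, hσb, smul_smul,
          show ((0:Fin 4):ℕ) = 0 from rfl, show ((1:Fin 4):ℕ) = 1 from rfl,
          show ((2:Fin 4):ℕ) = 2 from rfl, show ((3:Fin 4):ℕ) = 3 from rfl]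
      have heq2 : σ (δ u) = (-ζ * c 0) • b 0 + (-ζ * c 1) • b 1
          + (-ζ * c 2) • b 2 + (-ζ * c 3) • b 3 := by
        rw [hA, hrepr]
        simp only [smul_add, smul_smul]
      exact heq.symm.trans heq2
    have hindep : ∀ g : Fin 4 → k, (∑ i, g i • b i) = 0 → ∀ j, g j = 0 :=
      fun g hg => Fintype.linearIndependent_iff.1 b.linearIndependent g hg
    have hsum : (∑ i, (![c 0 + ζ * c 0, c 1 * ζ + ζ * c 1, c 2 * ζ ^ 2 + ζ * c 2,
        c 3 * ζ ^ 3 + ζ * c 3] : Fin 4 → k) i • b i) = 0 := by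
      rw [Fin.sum_univ_four]
      simp only [Matrix.cons_val_zero, Matrix.cons_val_one, Matrix.head_cons,
        Matrix.cons_val_two, Matrix.tail_cons, Matrix.cons_val_three]
      calc (c 0 + ζ * c 0) • b 0 + (c 1 * ζ + ζ * c 1) • b 1 + (c 2 * ζ ^ 2 + ζ * c 2) • b 2
            + (c 3 * ζ ^ 3 + ζ * c 3) • b 3
          = ((c 0 * ζ ^ (0:ℕ)) • b 0 + (c 1 * ζ ^ (1:ℕ)) • b 1
              + (c 2 * ζ ^ (2:ℕ)) • b 2 + (c 3 * ζ ^ (3:ℕ)) • b 3)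
            - ((-ζ * c 0) • b 0 + (-ζ * c 1) • b 1 + (-ζ * c 2) • b 2 + (-ζ * c 3) • b 3) := by
            module
        _ = 0 := by rw [hth, sub_self]
    have e0 : c 0 + ζ * c 0 = 0 := by simpa using hindep _ hsum 0
    have e1 : c 1 * ζ + ζ * c 1 = 0 := by simpa using hindep _ hsum 1
    have e2 : c 2 * ζ ^ 2 + ζ * c 2 = 0 := by simpa using hindep _ hsum 2
    have hc0 : c 0 = 0 := by
      have hz : c 0 * (1 + ζ) = 0 := by linear_combination e0
      rcases mul_eq_zero.1 hz with h' | h'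
      · exact h'
      · exact absurd (by linear_combination h' : ζ = -1) hζn1
    have hc1 : c 1 = 0 := by
      have hz : c 1 * (2 * ζ) = 0 := by linear_combination e1
      rcases mul_eq_zero.1 hz with h' | h'
      · exact h'
      · rcases mul_eq_zero.1 h' with h'' | h''
        · norm_num at h''
        · exact absurd h'' hζ0
    have hc2 : c 2 = 0 := by
      have hz : c 2 * (ζ - 1) = 0 := by linear_combination e2 - c 2 * hζ2
      rcases mul_eq_zero.1 hz with h' | h'
      · exact h'
      · exact absurd (by linear_combination h' : ζ = 1) hζ1
    set γ := c 3 with hγdef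
    have hδu : δ u = γ • u ^ 3 := by
      rw [hrepr, hc0, hc1, hc2, hb 3, show ((3:Fin 4):ℕ) = 3 from rfl]
      simp
    -- compute δ(u²), δ(u³)
    have hδ2 : δ (u ^ 2) = (γ * (1 + ζ)) • (1 : A) := by
      have e := h3 u u
      rw [hσu, hδu, smul_mul_smul_comm, smul_mul_assoc,
        show u * u ^ 3 = u ^ 4 by ring, show u ^ 3 * u = u ^ 4 by ring, hu] at e
      rw [show u ^ 2 = u * u by ring, e]
      module
    have hδ3 : δ (u ^ 3) = (γ * ζ) • u := by
      have e := h3 u (u ^ 2)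
      rw [hσu, hδu, hδ2, smul_mul_smul_comm, smul_mul_assoc, mul_one,
        show u ^ 3 * u ^ 2 = u ^ 4 * u by ring, hu, one_mul] at e
      rw [show u ^ 3 = u * u ^ 2 by ring, e]
      match_scalars
      linear_combination γ * hζ2
    have hkey : (ζ * γ ^ 2) • u = ((-2 : k)) • u := by
      have hth := LinearMap.congr_fun h5 u
      simp only [LinearMap.comp_apply, LinearMap.sub_apply, LinearMap.id_apply,
        AlgEquiv.toLinearMap_apply] at hth
      rw [hδu, map_smul, hδ3, hσu, map_smul, hσu, smul_smul, smul_smul,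
        show ζ * ζ = ζ ^ 2 by ring, hζ2] at hth
      rw [show γ * (γ * ζ) = ζ * γ ^ 2 by ring] at hth
      rw [hth]
      module
    have hfin : ζ * γ ^ 2 = -2 := by
      have hz : (ζ * γ ^ 2 - (-2)) • u = 0 := by
        rw [sub_smul, hkey, sub_self]
      rcases smul_eq_zero.1 hz with h | h
      · linear_combination h
      · exact absurd h hune
    refine ⟨γ, ?_, hδu⟩
    have hz : ζ * (γ ^ 2 - 2 * ζ) = 0 := by linear_combination hfin - 2 * hζ2
    rcases mul_eq_zero.1 hz with h | h
    · exact absurd h hζ0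
    · linear_combination h
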